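/- Fix ρ > 0 and W > 0, and for N ∈ ℕ with N ≥ 2 set L_N = N/(ρW) and τ_N = iρW²/N. Let K_N(z,z′) be the type D_N correlation kernel (𝒩 = 2(N−1), J(j) = j−1) built with (L, τ) = (L_N, τ_N). Then for every z, z′ ∈ ℂ (z = x+iy, z′ = x′+iy′), lim_{N→∞} K_N(z,z′) = ρ e^{−2πρ(y²+(y′)²)} [ ∫_{−√ρ W}^{√ρ W} e^{−πλ² + 2πi√ρ(z−conj(z′))λ} θ₂(√ρ W (iλ + 2√ρ z); 2iρW²) θ₂(√ρ W (iλ − 2√ρ conj(z′)); 2iρW²) dλ + ∫_{−√ρ W}^{√ρ W} e^{−πλ² + 2πi√ρ(z+conj(z′))λ} θ₂(√ρ W (iλ + 2√ρ z); 2iρW²) θ₂(√ρ W (iλ + 2√ρ conj(z′)); 2iρW²) dλ ]. -/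

import Mathlib

open Complex MeasureTheory
open scoped Real ComplexConjugate

noncomputable section

/-- The Jacobi theta function θ₀. -/
def jtheta0 (v τ : ℂ) : ℂ :=
  ∑' n : ℤ, (-1 : ℂ) ^ n * Complex.exp (π * I * τ * (n : ℂ) ^ 2) *
    Complex.exp (2 * π * I * (n : ℂ) * v)

/-- The Jacobi theta function θ₁. -/
def jtheta1 (v τ : ℂ) : ℂ :=
  I * ∑' n : ℤ, (-1 : ℂ) ^ n * Complex.exp (π * I * τ * ((n : ℂ) - 1 / 2) ^ 2) *
    Complex.exp ((2 * (n : ℂ) - 1) * π * I * v)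

/-- The Jacobi theta function θ₂. -/
def jtheta2 (v τ : ℂ) : ℂ :=
  ∑' n : ℤ, Complex.exp (π * I * τ * ((n : ℂ) - 1 / 2) ^ 2) *
    Complex.exp ((2 * (n : ℂ) - 1) * π * I * v)

/-- The Jacobi theta function θ₃. -/
def jtheta3 (v τ : ℂ) : ℂ :=
  ∑' n : ℤ, Complex.exp (π * I * τ * (n : ℂ) ^ 2) * Complex.exp (2 * π * I * (n : ℂ) * v)

/-- Dedekind's eta function. -/
def dedekindEta (τ : ℂ) : ℂ :=
  Complex.exp (π * I * τ / 12) * ∏' n : ℕ, (1 - Complex.exp (2 * π * I * ((n : ℂ) + 1) * τ))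

/-- For type D_N:
M_j(z) = e^{2πiJz/L} θ₂(Jτ + 𝒩z/L; 𝒩τ) + e^{−2πiJz/L} θ₂(Jτ − 𝒩z/L; 𝒩τ), τ = iW/L. -/
def MD (nn : ℕ) (L W : ℝ) (Jj : ℝ) (z : ℂ) : ℂ :=
  Complex.exp (2 * π * I * Jj * z / L) *
      jtheta2 ((Jj : ℂ) * (I * W / L) + nn * z / L) (nn * (I * W / L)) +
    Complex.exp (-(2 * π * I * Jj * z / L)) *
      jtheta2 ((Jj : ℂ) * (I * W / L) - nn * z / L) (nn * (I * W / L))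

/-- h_j = c_j (LW/√(2𝒩W/L)) e^{2πW J(j)²/(𝒩L)}, c_j = 4 for j ∈ {1, N}, c_j = 2 otherwise
(0-based index j, J(j) = j). -/
def hD (N nn : ℕ) (L W : ℝ) (j : Fin N) : ℝ :=
  (if (j : ℕ) = 0 ∨ (j : ℕ) = N - 1 then 4 else 2) *
    (L * W / Real.sqrt (2 * nn * W / L)) *
    Real.exp (2 * π * W * ((j : ℕ) : ℝ) ^ 2 / (nn * L))

/-- The type D_N correlation kernel with 𝒩 = 2(N−1), L = N/(ρW), τ = iρW²/N. -/
def KD (N : ℕ) (ρ W : ℝ) (z z' : ℂ) : ℂ :=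
  let L : ℝ := N / (ρ * W)
  Complex.exp (-(π * (2 * (N - 1)) * (z.im ^ 2 + z'.im ^ 2) / (L * W))) *
    ∑ n : Fin N,
      MD (2 * (N - 1)) L W ((n : ℕ) : ℝ) z * conj (MD (2 * (N - 1)) L W ((n : ℕ) : ℝ) z') /
        hD N (2 * (N - 1)) L W n

namespace St14

open Filter Finset

/-! ### Theta function basics -/

def th2term (v τ : ℂ) (n : ℤ) : ℂ :=
  Complex.exp (π * I * τ * ((n : ℂ) - 1 / 2) ^ 2) *
    Complex.exp ((2 * (n : ℂ) - 1) * π * I * v)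

lemma jtheta2_eq (v τ : ℂ) : jtheta2 v τ = ∑' n : ℤ, th2term v τ n := rfl

def th2bd (t₀ C : ℝ) (n : ℤ) : ℝ :=
  Real.exp (-(π * t₀ * ((n : ℝ) - 1 / 2) ^ 2) + (2 * |(n : ℝ)| + 1) * π * C)

lemma summable_exp_of_diff_tendsto {f : ℕ → ℝ}
    (h : Tendsto (fun n => f (n + 1) - f n) atTop atBot) :
    Summable fun n => Real.exp (f n) := by
  apply summable_of_ratio_norm_eventually_le (r := 1 / 2) (by norm_num)
  have h2 : ∀ᶠ n in atTop, f (n + 1) - f n ≤ Real.log (1 / 2) :=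
    h.eventually (eventually_le_atBot _)
  filter_upwards [h2] with n hn
  rw [Real.norm_eq_abs, Real.norm_eq_abs, abs_of_pos (Real.exp_pos _),
    abs_of_pos (Real.exp_pos _)]
  have : Real.exp (f (n + 1)) = Real.exp (f (n + 1) - f n) * Real.exp (f n) := by
    rw [← Real.exp_add]; ring_nf
  rw [this]
  have h3 : Real.exp (f (n + 1) - f n) ≤ 1 / 2 := by
    calc Real.exp (f (n + 1) - f n) ≤ Real.exp (Real.log (1 / 2)) := Real.exp_le_exp.mpr hn
      _ = 1 / 2 := Real.exp_log (by norm_num)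
  exact mul_le_mul_of_nonneg_right h3 (Real.exp_pos _).le

lemma tendsto_affine_atBot {c d : ℝ} (hc : 0 < c) :
    Tendsto (fun n : ℕ => -(c * (n : ℝ)) + d) atTop atBot := by
  apply Filter.tendsto_atBot_add_const_right
  have h1 : Tendsto (fun n : ℕ => c * (n : ℝ)) atTop atTop :=
    (tendsto_natCast_atTop_atTop (R := ℝ)).const_mul_atTop hc
  simpa [Function.comp_def] using tendsto_neg_atTop_atBot.comp h1

lemma summable_th2bd {t₀ : ℝ} (C : ℝ) (ht : 0 < t₀) : Summable (th2bd t₀ C) := by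
  apply Summable.of_nat_of_neg
  · have : (fun n : ℕ => th2bd t₀ C (n : ℤ)) =
        fun n : ℕ => Real.exp (-(π * t₀ * ((n : ℝ) - 1 / 2) ^ 2) + (2 * (n : ℝ) + 1) * π * C) := by
      funext n
      simp only [th2bd]
      push_cast
      rw [_root_.abs_of_nonneg (by positivity : (0:ℝ) ≤ (n:ℝ))]
    rw [this]
    apply summable_exp_of_diff_tendsto
    have heq : (fun n : ℕ =>
        (-(π * t₀ * (((n+1) : ℝ) - 1 / 2) ^ 2) + (2 * ((n+1) : ℝ) + 1) * π * C) -
        (-(π * t₀ * ((n : ℝ) - 1 / 2) ^ 2) + (2 * (n : ℝ) + 1) * π * C)) =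
        fun n : ℕ => -((2 * π * t₀) * (n : ℝ)) + (2 * π * C) := by
      funext n; ring
    refine Tendsto.congr' ?_
      (tendsto_affine_atBot (c := 2 * π * t₀) (d := 2 * π * C) (by positivity))
    filter_upwards with n
    have := congrFun heq n
    push_cast at this ⊢
    linarith [this]
  · have : (fun n : ℕ => th2bd t₀ C (-(n : ℤ))) =
        fun n : ℕ => Real.exp (-(π * t₀ * ((n : ℝ) + 1 / 2) ^ 2) + (2 * (n : ℝ) + 1) * π * C) := by
      funext n
      simp only [th2bd]
      push_cast
      rw [abs_neg, _root_.abs_of_nonneg (by positivity : (0:ℝ) ≤ (n:ℝ))]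
      ring_nf
    rw [this]
    apply summable_exp_of_diff_tendsto
    have heq : ∀ n : ℕ,
        ((-(π * t₀ * (((n:ℝ)+1) + 1 / 2) ^ 2) + (2 * ((n:ℝ)+1) + 1) * π * C) -
        (-(π * t₀ * ((n : ℝ) + 1 / 2) ^ 2) + (2 * (n : ℝ) + 1) * π * C)) =
        -((2 * π * t₀) * (n : ℝ)) + (2 * π * C - 2 * π * t₀) := by
      intro n; ring
    refine Tendsto.congr' ?_
      (tendsto_affine_atBot (c := 2 * π * t₀) (d := 2 * π * C - 2 * π * t₀) (by positivity))
    filter_upwards with n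
    rw [← heq n]
    push_cast
    ring_nf

lemma norm_th2term_le {v τ : ℂ} {t₀ C : ℝ} (h1 : t₀ ≤ τ.im) (h2 : |v.im| ≤ C) (n : ℤ) :
    ‖th2term v τ n‖ ≤ th2bd t₀ C n := by
  have e1 : (π * I * τ * ((n : ℂ) - 1 / 2) ^ 2) =
      ((π * ((n : ℝ) - 1 / 2) ^ 2 : ℝ) : ℂ) * (I * τ) := by push_cast; ring
  have e2 : ((2 * (n : ℂ) - 1) * π * I * v) =
      (((2 * (n : ℝ) - 1) * π : ℝ) : ℂ) * (I * v) := by push_cast; ring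
  rw [th2term, norm_mul, Complex.norm_exp,
    Complex.norm_exp, e1, e2, ← Real.exp_add, th2bd]
  apply Real.exp_le_exp.mpr
  rw [Complex.re_ofReal_mul, Complex.re_ofReal_mul]
  have hIτ : (I * τ).re = -τ.im := by simp
  have hIv : (I * v).re = -v.im := by simp
  rw [hIτ, hIv]
  have hC : 0 ≤ C := le_trans (abs_nonneg _) h2
  have hsq : 0 ≤ ((n : ℝ) - 1 / 2) ^ 2 := sq_nonneg _
  have hA : π * ((n : ℝ) - 1 / 2) ^ 2 * -τ.im ≤ -(π * t₀ * ((n : ℝ) - 1 / 2) ^ 2) := by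
    have := mul_le_mul_of_nonneg_left h1 (mul_nonneg Real.pi_pos.le hsq)
    nlinarith
  have hB : (2 * (n : ℝ) - 1) * π * -v.im ≤ (2 * |(n : ℝ)| + 1) * π * C := by
    have hx1 : (n : ℝ) ≤ |(n : ℝ)| := le_abs_self _
    have hx2 : -(n : ℝ) ≤ |(n : ℝ)| := neg_le_abs _
    have hv1 : v.im ≤ C := le_trans (le_abs_self _) h2
    have hv2 : -C ≤ v.im := neg_le_of_abs_le h2
    nlinarith [Real.pi_pos,
      mul_nonneg (sub_nonneg.mpr hx1) (sub_nonneg.mpr hv1),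
      mul_nonneg (by linarith : (0:ℝ) ≤ |(n : ℝ)| + (n:ℝ)) (by linarith : (0:ℝ) ≤ C + v.im)]
  linarith

lemma summable_th2term (v : ℂ) {τ : ℂ} (h : 0 < τ.im) : Summable (th2term v τ) := by
  exact (summable_th2bd (t₀ := τ.im) |v.im| h).of_norm_bounded
    (norm_th2term_le le_rfl le_rfl)

lemma norm_jtheta2_le {v τ : ℂ} {t₀ C : ℝ} (ht : 0 < t₀) (h1 : t₀ ≤ τ.im) (h2 : |v.im| ≤ C) :
    ‖jtheta2 v τ‖ ≤ ∑' n : ℤ, th2bd t₀ C n := by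
  rw [jtheta2_eq]
  have hsum : Summable fun n : ℤ => ‖th2term v τ n‖ :=
    (summable_th2bd C ht).of_nonneg_of_le (fun n => norm_nonneg _) (norm_th2term_le h1 h2)
  calc ‖∑' n : ℤ, th2term v τ n‖ ≤ ∑' n : ℤ, ‖th2term v τ n‖ := norm_tsum_le_tsum_norm hsum
    _ ≤ ∑' n : ℤ, th2bd t₀ C n :=
      Summable.tsum_le_tsum (norm_th2term_le h1 h2) hsum (summable_th2bd C ht)

lemma jtheta2_tendsto {α : Type*} {l : Filter α} {v τ : α → ℂ} {v₀ τ₀ : ℂ} (hτ : 0 < τ₀.im)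
    (hv : Tendsto v l (nhds v₀)) (ht : Tendsto τ l (nhds τ₀)) :
    Tendsto (fun x => jtheta2 (v x) (τ x)) l (nhds (jtheta2 v₀ τ₀)) := by
  simp only [jtheta2_eq]
  apply tendsto_tsum_of_dominated_convergence
    (bound := th2bd (τ₀.im / 2) (|v₀.im| + 1))
  · exact summable_th2bd _ (by linarith)
  · intro n
    apply Filter.Tendsto.mul
    · exact (Complex.continuous_exp.tendsto _).comp ((ht.const_mul _).mul_const _)
    · exact (Complex.continuous_exp.tendsto _).comp (tendsto_const_nhds.mul hv)
  · have him : Tendsto (fun x => (τ x).im) l (nhds τ₀.im) :=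
      (Complex.continuous_im.tendsto _).comp ht
    have hvm : Tendsto (fun x => |(v x).im|) l (nhds |v₀.im|) :=
      (_root_.continuous_abs.tendsto _).comp ((Complex.continuous_im.tendsto _).comp hv)
    filter_upwards [him.eventually (eventually_ge_nhds (show τ₀.im / 2 < τ₀.im by linarith)),
      hvm.eventually (eventually_le_nhds (show |v₀.im| < |v₀.im| + 1 by linarith))]
    with x hx1 hx2 n
    exact norm_th2term_le hx1 hx2 n

lemma jtheta2_neg (v τ : ℂ) : jtheta2 (-v) τ = jtheta2 v τ := by
  rw [jtheta2_eq, jtheta2_eq, ← Equiv.tsum_eq (Equiv.subLeft (1 : ℤ)) (th2term (-v) τ)]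
  congr 1
  funext n
  simp only [Equiv.subLeft_apply, th2term]
  congr 1
  · congr 1
    push_cast
    ring
  · congr 1
    push_cast
    ring

lemma jtheta2_conj (v τ : ℂ) : conj (jtheta2 v τ) = jtheta2 (-(conj v)) (-(conj τ)) := by
  rw [jtheta2_eq, jtheta2_eq]
  have : conj (∑' n : ℤ, th2term v τ n) = ∑' n : ℤ, conj (th2term v τ n) :=
    Complex.conjCLE.map_tsum
  rw [this]
  congr 1
  funext n
  simp only [th2term, map_mul, ← Complex.exp_conj]
  congr 1
  · congr 1
    simp only [map_mul, map_sub, map_div₀, map_pow, map_one, map_ofNat,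
      Complex.conj_I, Complex.conj_ofReal, map_intCast]
    ring
  · congr 1
    simp only [map_mul, map_sub, map_one, map_ofNat, Complex.conj_I,
      Complex.conj_ofReal, map_intCast]
    ring

lemma continuous_jtheta2_comp {τ₀ : ℂ} (hτ : 0 < τ₀.im) {f : ℝ → ℂ} (hf : Continuous f) :
    Continuous fun l : ℝ => jtheta2 (f l) τ₀ := by
  rw [continuous_iff_continuousAt]
  intro x
  exact jtheta2_tendsto hτ (hf.tendsto x) tendsto_const_nhds

/-! ### The discrete kernel as a step-function integral -/

def aa (ρ W : ℝ) : ℝ := Real.sqrt ρ * W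

def hval (ρ W : ℝ) (N j : ℕ) : ℝ :=
  (if j = 0 ∨ j = N - 1 then 4 else 2) *
      ((N : ℝ) / (ρ * W) * W / Real.sqrt (2 * ((2 * (N - 1) : ℕ) : ℝ) * W / ((N : ℝ) / (ρ * W)))) *
    Real.exp (2 * π * W * (j : ℝ) ^ 2 / (((2 * (N - 1) : ℕ) : ℝ) * ((N : ℝ) / (ρ * W))))

def termD (ρ W : ℝ) (z z' : ℂ) (N j : ℕ) : ℂ :=
  MD (2 * (N - 1)) ((N : ℝ) / (ρ * W)) W (j : ℝ) z *
    conj (MD (2 * (N - 1)) ((N : ℝ) / (ρ * W)) W (j : ℝ) z') / ((hval ρ W N j : ℝ) : ℂ)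

def phiN (ρ W : ℝ) (z z' : ℂ) (N : ℕ) (l : ℝ) : ℂ :=
  (((N : ℝ) / aa ρ W : ℝ) : ℂ) * termD ρ W z z' N (⌊(N : ℝ) * l / aa ρ W⌋.toNat)

def Mlim (ρ W : ℝ) (z : ℂ) (l : ℝ) : ℂ :=
  Complex.exp (2 * π * I * z * ((Real.sqrt ρ * l : ℝ) : ℂ)) *
      jtheta2 (((Real.sqrt ρ * W * l : ℝ) : ℂ) * I + ((2 * ρ * W : ℝ) : ℂ) * z)
        (((2 * ρ * W ^ 2 : ℝ) : ℂ) * I) +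
    Complex.exp (-(2 * π * I * z * ((Real.sqrt ρ * l : ℝ) : ℂ))) *
      jtheta2 (((Real.sqrt ρ * W * l : ℝ) : ℂ) * I - ((2 * ρ * W : ℝ) : ℂ) * z)
        (((2 * ρ * W ^ 2 : ℝ) : ℂ) * I)

def philim (ρ W : ℝ) (z z' : ℂ) (l : ℝ) : ℂ :=
  ((ρ * Real.exp (-(π * l ^ 2)) : ℝ) : ℂ) * (Mlim ρ W z l * conj (Mlim ρ W z' l))

section Main

variable {ρ W : ℝ} (z z' : ℂ)

lemma aa_pos (hρ : 0 < ρ) (hW : 0 < W) : 0 < aa ρ W := mul_pos (Real.sqrt_pos.mpr hρ) hW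

lemma nn_cast_pos {N : ℕ} (hN : 2 ≤ N) : (0:ℝ) < ((2 * (N - 1) : ℕ) : ℝ) := by
  have : 0 < 2 * (N - 1) := by omega
  exact_mod_cast this

lemma hval_pos (hρ : 0 < ρ) (hW : 0 < W) {N : ℕ} (hN : 2 ≤ N) (j : ℕ) : 0 < hval ρ W N j := by
  have hN0 : (0:ℝ) < (N : ℝ) := by exact_mod_cast (by omega : 0 < N)
  have hL : 0 < (N:ℝ)/(ρ*W) := by positivity
  have hnn := nn_cast_pos hN
  have hX : 0 < 2 * ((2*(N-1):ℕ):ℝ) * W / ((N:ℝ)/(ρ*W)) := by positivity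
  have hs : 0 < Real.sqrt (2 * ((2*(N-1):ℕ):ℝ) * W / ((N:ℝ)/(ρ*W))) := Real.sqrt_pos.mpr hX
  have h1 : 0 < (N:ℝ)/(ρ*W) * W / Real.sqrt (2 * ((2*(N-1):ℕ):ℝ) * W / ((N:ℝ)/(ρ*W))) :=
    div_pos (mul_pos hL hW) hs
  unfold hval
  split_ifs with h
  · exact mul_pos (mul_pos (by norm_num) h1) (Real.exp_pos _)
  · exact mul_pos (mul_pos (by norm_num) h1) (Real.exp_pos _)

lemma KD_eq (hρ : 0 < ρ) (hW : 0 < W) {N : ℕ} (hN : 2 ≤ N) :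
    KD N ρ W z z' =
      Complex.exp (-(π * (2 * ((N : ℂ) - 1)) * ((z.im : ℂ) ^ 2 + (z'.im : ℂ) ^ 2) /
          (((N : ℝ) / (ρ * W) : ℝ) * (W : ℂ)))) *
        ∫ l in (0 : ℝ)..(aa ρ W), phiN ρ W z z' N l := by
  have hN0 : (0:ℝ) < (N : ℝ) := by exact_mod_cast (by omega : 0 < N)
  have ha : 0 < aa ρ W := aa_pos hρ hW
  have hsum1 : (∑ n : Fin N, MD (2*(N-1)) ((N:ℝ)/(ρ*W)) W ((n:ℕ):ℝ) z *
      conj (MD (2*(N-1)) ((N:ℝ)/(ρ*W)) W ((n:ℕ):ℝ) z') /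
      ((hD N (2*(N-1)) ((N:ℝ)/(ρ*W)) W n : ℝ):ℂ)) = ∑ j ∈ range N, termD ρ W z z' N j :=
    Fin.sum_univ_eq_sum_range (fun j => termD ρ W z z' N j) N
  set p : ℕ → ℝ := fun j => j * (aa ρ W / N) with hp
  have hafrac : 0 < aa ρ W / N := by positivity
  have hple : ∀ j : ℕ, p j ≤ p (j+1) := by
    intro j
    simp only [hp]
    push_cast
    nlinarith
  have hstep : ∀ j : ℕ, ∀ l : ℝ, l ∈ Set.Ioo (p j) (p (j+1)) →
      phiN ρ W z z' N l = (((N:ℝ)/ aa ρ W : ℝ) : ℂ) * termD ρ W z z' N j := by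
    intro j l hl
    have e : ∀ x : ℝ, (N:ℝ) * (x * (aa ρ W / N)) = x * aa ρ W := by
      intro x; field_simp
    have h1 : (j:ℝ) * aa ρ W < (N:ℝ) * l := by
      have := mul_lt_mul_of_pos_left hl.1 hN0; rwa [e] at this
    have h2 : (N:ℝ) * l < ((j:ℝ)+1) * aa ρ W := by
      have := mul_lt_mul_of_pos_left hl.2 hN0; rw [e] at this; push_cast at this
      linarith
    have hfl : ⌊(N:ℝ) * l / aa ρ W⌋ = (j : ℤ) := by
      rw [Int.floor_eq_iff]
      constructor
      · rw [le_div_iff₀ ha]; push_cast; linarith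
      · rw [div_lt_iff₀ ha]; push_cast; linarith
    simp only [phiN, hfl, Int.toNat_natCast]
  have hae : ∀ j : ℕ, ∀ᵐ l : ℝ, l ∈ Set.uIoc (p j) (p (j+1)) →
      phiN ρ W z z' N l = (((N:ℝ)/ aa ρ W : ℝ) : ℂ) * termD ρ W z z' N j := by
    intro j
    have h0 : ∀ᵐ l : ℝ, l ≠ p (j+1) :=
      MeasureTheory.compl_mem_ae_iff.mpr (MeasureTheory.measure_singleton _)
    filter_upwards [h0] with l hl hmem
    rw [Set.uIoc_of_le (hple j)] at hmem
    exact hstep j l ⟨hmem.1, lt_of_le_of_ne hmem.2 hl⟩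
  have hint : ∀ j : ℕ, IntervalIntegrable (phiN ρ W z z' N) MeasureTheory.volume
      (p j) (p (j+1)) := by
    intro j
    rw [intervalIntegrable_iff]
    apply MeasureTheory.Integrable.congr
      ((integrableOn_const_iff (C := (((N:ℝ)/ aa ρ W : ℝ) : ℂ) * termD ρ W z z' N j)).mpr
        (Or.inr (by rw [Set.uIoc_of_le (hple j)]; exact measure_Ioc_lt_top)))
    exact ((MeasureTheory.ae_restrict_iff' measurableSet_uIoc).mpr
      ((hae j).mono fun l h hm => (h hm).symm))
  have hpieces : ∀ j : ℕ, (∫ l in (p j)..(p (j+1)), phiN ρ W z z' N l) =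
      termD ρ W z z' N j := by
    intro j
    rw [intervalIntegral.integral_congr_ae (hae j), intervalIntegral.integral_const]
    have hd : p (j+1) - p j = aa ρ W / N := by simp only [hp]; push_cast; ring
    rw [hd, real_smul]
    rw [show ((aa ρ W / (N:ℝ) : ℝ) : ℂ) * ((((N:ℝ)/ aa ρ W : ℝ) : ℂ) * termD ρ W z z' N j)
      = ((aa ρ W / (N:ℝ) * ((N:ℝ)/ aa ρ W) : ℝ) : ℂ) * termD ρ W z z' N j by push_cast; ring]
    rw [show aa ρ W / (N:ℝ) * ((N:ℝ)/ aa ρ W) = 1 by field_simp]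
    simp
  have hintegral : (∫ l in (0:ℝ)..(aa ρ W), phiN ρ W z z' N l) =
      ∑ j ∈ range N, termD ρ W z z' N j := by
    have h0 : p 0 = 0 := by simp [hp]
    have hN' : p N = aa ρ W := by simp only [hp]; field_simp
    rw [← h0, ← hN', ← intervalIntegral.sum_integral_adjacent_intervals
      (fun k _ => hint k)]
    exact Finset.sum_congr rfl fun j _ => hpieces j
  rw [hintegral]
  simp only [KD]
  rw [hsum1]

def BB (ρ W : ℝ) (z : ℂ) : ℝ :=
  ∑' n : ℤ, th2bd (ρ * W ^ 2) (ρ * W ^ 2 + 2 * ρ * W * |z.im|) n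

lemma BB_nonneg (ρ W : ℝ) (z : ℂ) : 0 ≤ BB ρ W z :=
  tsum_nonneg fun n => (Real.exp_pos _).le

lemma norm_MD_le (hρ : 0 < ρ) (hW : 0 < W) {N j : ℕ} (hN : 2 ≤ N) (hj : j ≤ N) (z : ℂ) :
    ‖MD (2*(N-1)) ((N:ℝ)/(ρ*W)) W ((j:ℕ):ℝ) z‖ ≤
      2 * Real.exp (2 * π * ρ * W * |z.im|) * BB ρ W z := by
  have hN0 : (0:ℝ) < (N : ℝ) := by exact_mod_cast (by omega : 0 < N)
  set L : ℝ := (N:ℝ)/(ρ*W) with hL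
  have hLpos : 0 < L := by positivity
  have hLne : L ≠ 0 := hLpos.ne'
  have hnnc : ((2*(N-1):ℕ):ℝ) = 2*((N:ℝ)-1) := by
    push_cast [Nat.cast_sub (by omega : 1 ≤ N)]; ring
  have hjN : ((j:ℕ):ℝ) ≤ (N:ℝ) := by exact_mod_cast hj
  have hjdiv : ((j:ℕ):ℝ)/(N:ℝ) ≤ 1 := by
    rw [div_le_one hN0]; exact hjN
  have hjdiv0 : 0 ≤ ((j:ℕ):ℝ)/(N:ℝ) := by positivity
  have hNdiv : ((N:ℝ)-1)/(N:ℝ) ≤ 1 := by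
    rw [div_le_one hN0]; linarith
  have hNdiv2 : (1:ℝ)/2 ≤ ((N:ℝ)-1)/(N:ℝ) := by
    rw [div_le_div_iff₀ (by norm_num) hN0]
    have : (2:ℝ) ≤ (N:ℝ) := by exact_mod_cast hN
    linarith
  set E : ℝ := Real.exp (2 * π * ρ * W * |z.im|) with hE
  have expbd : ∀ s : ℝ, |s| ≤ 2*π*ρ*W → ‖Complex.exp (((s:ℝ):ℂ) * (I*z))‖ ≤ E := by
    intro s hs
    rw [Complex.norm_exp, Complex.re_ofReal_mul, hE]
    apply Real.exp_le_exp.mpr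
    have h1 : (I*z).re = -z.im := by simp
    rw [h1]
    calc s * -z.im ≤ |s * -z.im| := le_abs_self _
      _ = |s| * |z.im| := by rw [abs_mul, abs_neg]
      _ ≤ (2*π*ρ*W) * |z.im| := mul_le_mul_of_nonneg_right hs (abs_nonneg _)
  have thbd : ∀ v τ : ℂ, |v.im| ≤ ρ*W^2 + 2*ρ*W*|z.im| → ρ*W^2 ≤ τ.im →
      ‖jtheta2 v τ‖ ≤ BB ρ W z := fun v τ hv hτ =>
    norm_jtheta2_le (by positivity) hτ hv
  -- the number s
  have hsval : 2*π*((j:ℕ):ℝ)/L = (2*π*ρ*W) * (((j:ℕ):ℝ)/(N:ℝ)) := by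
    rw [hL]; field_simp
  have hsbd : |2*π*((j:ℕ):ℝ)/L| ≤ 2*π*ρ*W := by
    rw [_root_.abs_of_nonneg (by positivity), hsval]
    calc (2*π*ρ*W) * (((j:ℕ):ℝ)/(N:ℝ)) ≤ (2*π*ρ*W) * 1 :=
      mul_le_mul_of_nonneg_left hjdiv (by positivity)
      _ = 2*π*ρ*W := mul_one _
  -- the theta arguments
  have hx : ((j:ℕ):ℝ)*W/L = ρ*W^2 * (((j:ℕ):ℝ)/(N:ℝ)) := by rw [hL]; field_simp
  have hy : ((2*(N-1):ℕ):ℝ)/L = 2*ρ*W * (((N:ℝ)-1)/(N:ℝ)) := by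
    rw [hnnc, hL]; field_simp
  have hx0 : 0 ≤ ((j:ℕ):ℝ)*W/L := by positivity
  have hy0 : 0 ≤ ((2*(N-1):ℕ):ℝ)/L := by positivity
  have hxle : ((j:ℕ):ℝ)*W/L ≤ ρ*W^2 := by
    rw [hx]
    calc ρ*W^2 * (((j:ℕ):ℝ)/(N:ℝ)) ≤ ρ*W^2 * 1 :=
      mul_le_mul_of_nonneg_left hjdiv (by positivity)
      _ = ρ*W^2 := mul_one _
  have hyle : ((2*(N-1):ℕ):ℝ)/L ≤ 2*ρ*W := by
    rw [hy]
    calc 2*ρ*W * (((N:ℝ)-1)/(N:ℝ)) ≤ 2*ρ*W * 1 :=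
      mul_le_mul_of_nonneg_left hNdiv (by positivity)
      _ = 2*ρ*W := mul_one _
  have himv : ∀ x y : ℝ, 0 ≤ x → x ≤ ρ*W^2 → 0 ≤ y → y ≤ 2*ρ*W →
      |(((x:ℝ):ℂ)*I + ((y:ℝ):ℂ)*z).im| ≤ ρ*W^2 + 2*ρ*W*|z.im| := by
    intro x y hx0' hx' hy0' hy'
    have him : (((x:ℝ):ℂ)*I + ((y:ℝ):ℂ)*z).im = x + y * z.im := by simp
    rw [him]
    calc |x + y * z.im| ≤ |x| + |y * z.im| := abs_add_le _ _
      _ = x + y * |z.im| := by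
          rw [_root_.abs_of_nonneg hx0', abs_mul, _root_.abs_of_nonneg hy0']
      _ ≤ ρ*W^2 + 2*ρ*W*|z.im| := by
          have := mul_le_mul_of_nonneg_right hy' (abs_nonneg z.im)
          linarith
  have himv' : ∀ x y : ℝ, 0 ≤ x → x ≤ ρ*W^2 → 0 ≤ y → y ≤ 2*ρ*W →
      |(((x:ℝ):ℂ)*I - ((y:ℝ):ℂ)*z).im| ≤ ρ*W^2 + 2*ρ*W*|z.im| := by
    intro x y hx0' hx' hy0' hy'
    have him : (((x:ℝ):ℂ)*I - ((y:ℝ):ℂ)*z).im = x + y * (-z.im) := by simp; ring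
    rw [him]
    calc |x + y * (-z.im)| ≤ |x| + |y * (-z.im)| := abs_add_le _ _
      _ = x + y * |z.im| := by
          rw [_root_.abs_of_nonneg hx0', abs_mul, _root_.abs_of_nonneg hy0', abs_neg]
      _ ≤ ρ*W^2 + 2*ρ*W*|z.im| := by
          have := mul_le_mul_of_nonneg_right hy' (abs_nonneg z.im)
          linarith
  -- τ
  have hτim : ((((2*(N-1):ℕ):ℝ)*W/L : ℝ) : ℂ).im = 0 := by simp
  have hτval : ((2*(N-1):ℕ):ℝ)*W/L = 2*ρ*W^2 * (((N:ℝ)-1)/(N:ℝ)) := by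
    rw [hnnc, hL]; field_simp
  have hτge : ρ*W^2 ≤ ((2*(N-1):ℕ):ℝ)*W/L := by
    rw [hτval]
    calc ρ*W^2 = 2*ρ*W^2 * (1/2) := by ring
      _ ≤ 2*ρ*W^2 * (((N:ℝ)-1)/(N:ℝ)) := mul_le_mul_of_nonneg_left hNdiv2 (by positivity)
  -- canonical rewriting of MD
  have eArg1 : 2*(π:ℂ)*I*((((j:ℕ):ℝ)):ℂ)*z/((L:ℝ):ℂ) = ((2*π*((j:ℕ):ℝ)/L : ℝ):ℂ) * (I*z) := by
    push_cast; ring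
  have eArg2 : -(2*(π:ℂ)*I*((((j:ℕ):ℝ)):ℂ)*z/((L:ℝ):ℂ)) =
      ((-(2*π*((j:ℕ):ℝ)/L) : ℝ):ℂ) * (I*z) := by
    push_cast; ring
  have eV1 : ((((j:ℕ):ℝ)):ℂ)*(I*((W:ℝ):ℂ)/((L:ℝ):ℂ)) + ((2*(N-1):ℕ):ℂ)*z/((L:ℝ):ℂ) =
      ((((j:ℕ):ℝ)*W/L : ℝ):ℂ)*I + ((((2*(N-1):ℕ):ℝ)/L : ℝ):ℂ)*z := by
    push_cast; ring
  have eV2 : ((((j:ℕ):ℝ)):ℂ)*(I*((W:ℝ):ℂ)/((L:ℝ):ℂ)) - ((2*(N-1):ℕ):ℂ)*z/((L:ℝ):ℂ) =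
      ((((j:ℕ):ℝ)*W/L : ℝ):ℂ)*I - ((((2*(N-1):ℕ):ℝ)/L : ℝ):ℂ)*z := by
    push_cast; ring
  have eT : ((2*(N-1):ℕ):ℂ)*(I*((W:ℝ):ℂ)/((L:ℝ):ℂ)) =
      ((((2*(N-1):ℕ):ℝ)*W/L : ℝ):ℂ)*I := by
    push_cast; ring
  have hτge' : ρ*W^2 ≤ (((((2*(N-1):ℕ):ℝ)*W/L : ℝ):ℂ)*I).im := by
    have : (((((2*(N-1):ℕ):ℝ)*W/L : ℝ):ℂ)*I).im = ((2*(N-1):ℕ):ℝ)*W/L := by simp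
    rw [this]; exact hτge
  rw [MD, eArg2, eArg1, eV1, eV2, eT]
  calc ‖Complex.exp (((2*π*((j:ℕ):ℝ)/L : ℝ):ℂ) * (I*z)) *
        jtheta2 (((((j:ℕ):ℝ)*W/L : ℝ):ℂ)*I + ((((2*(N-1):ℕ):ℝ)/L : ℝ):ℂ)*z)
          (((((2*(N-1):ℕ):ℝ)*W/L : ℝ):ℂ)*I) +
      Complex.exp (((-(2*π*((j:ℕ):ℝ)/L) : ℝ):ℂ) * (I*z)) *
        jtheta2 (((((j:ℕ):ℝ)*W/L : ℝ):ℂ)*I - ((((2*(N-1):ℕ):ℝ)/L : ℝ):ℂ)*z)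
          (((((2*(N-1):ℕ):ℝ)*W/L : ℝ):ℂ)*I)‖ ≤
      ‖Complex.exp (((2*π*((j:ℕ):ℝ)/L : ℝ):ℂ) * (I*z))‖ *
        ‖jtheta2 (((((j:ℕ):ℝ)*W/L : ℝ):ℂ)*I + ((((2*(N-1):ℕ):ℝ)/L : ℝ):ℂ)*z)
          (((((2*(N-1):ℕ):ℝ)*W/L : ℝ):ℂ)*I)‖ +
      ‖Complex.exp (((-(2*π*((j:ℕ):ℝ)/L) : ℝ):ℂ) * (I*z))‖ *
        ‖jtheta2 (((((j:ℕ):ℝ)*W/L : ℝ):ℂ)*I - ((((2*(N-1):ℕ):ℝ)/L : ℝ):ℂ)*z)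
          (((((2*(N-1):ℕ):ℝ)*W/L : ℝ):ℂ)*I)‖ := by
        refine le_trans (norm_add_le _ _) ?_
        rw [norm_mul, norm_mul]
    _ ≤ E * BB ρ W z + E * BB ρ W z := by
        refine add_le_add
          (mul_le_mul (expbd _ hsbd)
            (thbd _ _ (by
              refine himv _ _ hx0 hxle hy0 hyle) hτge') (norm_nonneg _) (by positivity))
          (mul_le_mul (expbd _ (by rwa [abs_neg]))
            (thbd _ _ (by
              refine himv' _ _ hx0 hxle hy0 hyle) hτge') (norm_nonneg _) (by positivity))
    _ = 2 * E * BB ρ W z := by ring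

lemma phiN_meas (N : ℕ) : Measurable (phiN ρ W z z' N) := by
  have h1 : Measurable fun l : ℝ => (N:ℝ) * l / aa ρ W :=
    (measurable_id.const_mul _).div_const _
  have h2 : Measurable fun l : ℝ => ⌊(N:ℝ) * l / aa ρ W⌋ := h1.floor
  have h3 : Measurable fun l : ℝ => (⌊(N:ℝ) * l / aa ρ W⌋).toNat :=
    (measurable_from_top (f := Int.toNat)).comp h2
  exact (measurable_from_nat
    (f := fun j : ℕ => (((N:ℝ)/ aa ρ W : ℝ):ℂ) * termD ρ W z z' N j)).comp h3

lemma sqrt_four_rho (hρ : 0 < ρ) (hW : 0 < W) :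
    Real.sqrt (4 * ρ * W^2) = 2 * Real.sqrt ρ * W := by
  rw [show 4 * ρ * W^2 = (2 * Real.sqrt ρ * W)^2 by
    rw [mul_pow, mul_pow]; rw [Real.sq_sqrt hρ.le]; ring]
  exact Real.sqrt_sq (by positivity)

lemma phiN_bound (hρ : 0 < ρ) (hW : 0 < W) : ∃ D : ℝ, ∀ N : ℕ, 2 ≤ N → ∀ l ∈ Set.Ioc 0 (aa ρ W),
    ‖phiN ρ W z z' N l‖ ≤ D := by
  set bM : ℝ := 2 * Real.exp (2 * π * ρ * W * |z.im|) * BB ρ W z with hbM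
  set bM' : ℝ := 2 * Real.exp (2 * π * ρ * W * |z'.im|) * BB ρ W z' with hbM'
  have hbM0 : 0 ≤ bM := by
    have := BB_nonneg ρ W z; positivity
  have hbM'0 : 0 ≤ bM' := by
    have := BB_nonneg ρ W z'; positivity
  refine ⟨ρ * (bM * bM'), fun N hN l hl => ?_⟩
  have hN0 : (0:ℝ) < (N : ℝ) := by exact_mod_cast (by omega : 0 < N)
  have ha : 0 < aa ρ W := aa_pos hρ hW
  set j : ℕ := (⌊(N:ℝ) * l / aa ρ W⌋).toNat with hj
  have hjN : j ≤ N := by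
    rw [hj, Int.toNat_le]
    have : (N:ℝ) * l / aa ρ W ≤ ((N:ℤ):ℝ) := by
      rw [div_le_iff₀ ha]
      push_cast
      calc (N:ℝ) * l ≤ (N:ℝ) * aa ρ W := mul_le_mul_of_nonneg_left hl.2 hN0.le
        _ = (N:ℝ) * aa ρ W := rfl
    calc ⌊(N:ℝ) * l / aa ρ W⌋ ≤ ⌊((N:ℤ):ℝ)⌋ := Int.floor_le_floor this
      _ = (N:ℤ) := Int.floor_intCast _
  -- positivity facts about hval
  have hpos := hval_pos hρ hW hN j
  set L : ℝ := (N:ℝ)/(ρ*W) with hLd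
  have hLpos : 0 < L := by positivity
  have hnn := nn_cast_pos hN
  have hX : 0 < 2 * ((2*(N-1):ℕ):ℝ) * W / L := by positivity
  have hsX : 0 < Real.sqrt (2 * ((2*(N-1):ℕ):ℝ) * W / L) := Real.sqrt_pos.mpr hX
  have hnnc : ((2*(N-1):ℕ):ℝ) = 2*((N:ℝ)-1) := by
    push_cast [Nat.cast_sub (by omega : 1 ≤ N)]; ring
  have hXle : 2 * ((2*(N-1):ℕ):ℝ) * W / L ≤ 4 * ρ * W^2 := by
    rw [hnnc, hLd]
    have he : 4*ρ*W^2*((N:ℝ)/(ρ*W)) = 4*W*(N:ℝ) := by field_simp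
    rw [div_le_iff₀ (show (0:ℝ) < (N:ℝ)/(ρ*W) by positivity), he]
    nlinarith
  have hsXle : Real.sqrt (2 * ((2*(N-1):ℕ):ℝ) * W / L) ≤ 2 * Real.sqrt ρ * W := by
    rw [← sqrt_four_rho hρ hW]
    exact Real.sqrt_le_sqrt hXle
  have h2pos : 0 < 2 * (L * W / Real.sqrt (2 * ((2*(N-1):ℕ):ℝ) * W / L)) := by positivity
  have hh2 : 2 * (L * W / Real.sqrt (2 * ((2*(N-1):ℕ):ℝ) * W / L)) ≤ hval ρ W N j := by
    rw [hval]
    have hc : (2:ℝ) ≤ (if j = 0 ∨ j = N - 1 then (4:ℝ) else 2) := by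
      split_ifs <;> norm_num
    have hexp : (1:ℝ) ≤ Real.exp (2 * π * W * (j:ℝ)^2 / (((2*(N-1):ℕ):ℝ) * L)) :=
      Real.one_le_exp (by positivity)
    calc 2 * (L * W / Real.sqrt (2 * ((2*(N-1):ℕ):ℝ) * W / L))
        = 2 * (L * W / Real.sqrt (2 * ((2*(N-1):ℕ):ℝ) * W / L)) * 1 := by ring
      _ ≤ (if j = 0 ∨ j = N - 1 then (4:ℝ) else 2) *
            (L * W / Real.sqrt (2 * ((2*(N-1):ℕ):ℝ) * W / L)) *
            Real.exp (2 * π * W * (j:ℝ)^2 / (((2*(N-1):ℕ):ℝ) * L)) := by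
          apply mul_le_mul
          · exact mul_le_mul_of_nonneg_right hc (by positivity)
          · exact hexp
          · norm_num
          · positivity
  have hkey : ((N:ℝ)/ aa ρ W) / hval ρ W N j ≤ ρ := by
    rw [div_le_iff₀ hpos]
    calc (N:ℝ)/ aa ρ W ≤ ρ * (2 * (L * W / Real.sqrt (2 * ((2*(N-1):ℕ):ℝ) * W / L))) := by
          rw [show ρ * (2 * (L * W / Real.sqrt (2 * ((2*(N-1):ℕ):ℝ) * W / L)))
            = (2*ρ*L*W) / Real.sqrt (2 * ((2*(N-1):ℕ):ℝ) * W / L) by ring]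
          rw [le_div_iff₀ hsX]
          calc (N:ℝ)/ aa ρ W * Real.sqrt (2 * ((2*(N-1):ℕ):ℝ) * W / L)
              ≤ (N:ℝ)/ aa ρ W * (2 * Real.sqrt ρ * W) :=
                mul_le_mul_of_nonneg_left hsXle (by positivity)
            _ = 2*ρ*L*W := by
                rw [aa, hLd]
                have hsρ : Real.sqrt ρ ≠ 0 := (Real.sqrt_pos.mpr hρ).ne'
                have hρρ : Real.sqrt ρ * Real.sqrt ρ = ρ := Real.mul_self_sqrt hρ.le
                field_simp
      _ ≤ ρ * hval ρ W N j := mul_le_mul_of_nonneg_left hh2 hρ.le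
  -- assemble
  have hMz := norm_MD_le (z := z) hρ hW hN hjN
  have hMz' := norm_MD_le (z := z') hρ hW hN hjN
  rw [phiN]
  rw [norm_mul, Complex.norm_real, Real.norm_eq_abs,
    _root_.abs_of_nonneg (by positivity : (0:ℝ) ≤ (N:ℝ)/ aa ρ W)]
  rw [termD, norm_div, norm_mul, Complex.norm_real, Real.norm_eq_abs,
    _root_.abs_of_nonneg hpos.le, RCLike.norm_conj]
  rw [show (N:ℝ)/ aa ρ W * (‖MD (2*(N-1)) ((N:ℝ)/(ρ*W)) W ((j:ℕ):ℝ) z‖ *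
      ‖MD (2*(N-1)) ((N:ℝ)/(ρ*W)) W ((j:ℕ):ℝ) z'‖ / hval ρ W N j)
    = ((N:ℝ)/ aa ρ W / hval ρ W N j) * (‖MD (2*(N-1)) ((N:ℝ)/(ρ*W)) W ((j:ℕ):ℝ) z‖ *
      ‖MD (2*(N-1)) ((N:ℝ)/(ρ*W)) W ((j:ℕ):ℝ) z'‖) by ring]
  calc ((N:ℝ)/ aa ρ W / hval ρ W N j) * (‖MD (2*(N-1)) ((N:ℝ)/(ρ*W)) W ((j:ℕ):ℝ) z‖ *
      ‖MD (2*(N-1)) ((N:ℝ)/(ρ*W)) W ((j:ℕ):ℝ) z'‖)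
      ≤ ρ * (‖MD (2*(N-1)) ((N:ℝ)/(ρ*W)) W ((j:ℕ):ℝ) z‖ *
        ‖MD (2*(N-1)) ((N:ℝ)/(ρ*W)) W ((j:ℕ):ℝ) z'‖) :=
        mul_le_mul_of_nonneg_right hkey (by positivity)
    _ ≤ ρ * (bM * bM') := by
        refine mul_le_mul_of_nonneg_left ?_ hρ.le
        exact mul_le_mul hMz hMz' (norm_nonneg _) hbM0

set_option maxHeartbeats 2000000 in
lemma phiN_tendsto (hρ : 0 < ρ) (hW : 0 < W) {l : ℝ} (hl : l ∈ Set.Ioo 0 (aa ρ W)) :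
    Tendsto (fun N : ℕ => phiN ρ W z z' N l) atTop (nhds (philim ρ W z z' l)) := by
  obtain ⟨hl0, hla⟩ := hl
  have ha : 0 < aa ρ W := aa_pos hρ hW
  set A := aa ρ W with hA
  set sq := Real.sqrt ρ with hsq
  have hsq0 : 0 < sq := Real.sqrt_pos.mpr hρ
  have hsqsq : sq * sq = ρ := Real.mul_self_sqrt hρ.le
  have hAval : A = sq * W := by rw [hA, hsq]; rfl
  set jf : ℕ → ℕ := fun N => (⌊(N:ℝ) * l / A⌋).toNat with hjf
  set sf : ℕ → ℝ := fun N => (jf N : ℝ) * A / (N:ℝ) with hsfd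
  have hjcast : ∀ N : ℕ, ((jf N : ℕ):ℝ) = ((⌊(N:ℝ) * l / A⌋ : ℤ):ℝ) := by
    intro N
    have h0 : 0 ≤ ⌊(N:ℝ) * l / A⌋ := Int.floor_nonneg.mpr (by positivity)
    simp only [hjf]
    exact_mod_cast congrArg (Int.cast : ℤ → ℝ) (Int.toNat_of_nonneg h0)
  -- sf squeeze
  have hsfle : ∀ N : ℕ, 1 ≤ N → sf N ≤ l := by
    intro N hN1
    have hN0 : (0:ℝ) < (N:ℝ) := by exact_mod_cast (by omega : 0 < N)
    have h1 : ((jf N : ℕ):ℝ) ≤ (N:ℝ) * l / A := by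
      rw [hjcast]; exact Int.floor_le _
    have h2 : (jf N : ℝ) * A / (N:ℝ) ≤ ((N:ℝ) * l / A) * A / (N:ℝ) :=
      (div_le_div_iff_of_pos_right hN0).mpr (mul_le_mul_of_nonneg_right h1 ha.le)
    calc sf N ≤ ((N:ℝ) * l / A) * A / (N:ℝ) := h2
      _ = l := by field_simp
  have hsfgt : ∀ N : ℕ, 1 ≤ N → l - A / (N:ℝ) < sf N := by
    intro N hN1
    have hN0 : (0:ℝ) < (N:ℝ) := by exact_mod_cast (by omega : 0 < N)
    have h1 : (N:ℝ) * l / A - 1 < ((jf N : ℕ):ℝ) := by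
      rw [hjcast]; exact Int.sub_one_lt_floor _
    have h2 : ((N:ℝ) * l / A - 1) * A / (N:ℝ) < (jf N : ℝ) * A / (N:ℝ) :=
      (div_lt_div_iff_of_pos_right hN0).mpr (mul_lt_mul_of_pos_right h1 ha)
    calc l - A / (N:ℝ) = ((N:ℝ) * l / A - 1) * A / (N:ℝ) := by field_simp
      _ < sf N := h2
  have hsf : Tendsto sf atTop (nhds l) := by
    have hg : Tendsto (fun N : ℕ => l - A / (N:ℝ)) atTop (nhds l) := by
      have := (tendsto_const_div_atTop_nhds_zero_nat A)
      have h2 := tendsto_const_nhds (α := ℕ) (f := atTop) (x := l) |>.sub this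
      simpa using h2
    refine tendsto_of_tendsto_of_tendsto_of_le_of_le' hg tendsto_const_nhds ?_ ?_
    · filter_upwards [eventually_ge_atTop 1] with N hN1
      exact (hsfgt N hN1).le
    · filter_upwards [eventually_ge_atTop 1] with N hN1
      exact hsfle N hN1
  -- eventually the if-condition in hval is false
  have hxT : Tendsto (fun N : ℕ => (N:ℝ) * l / A) atTop atTop := by
    have := (tendsto_natCast_atTop_atTop (R := ℝ)).atTop_mul_const
      (show (0:ℝ) < l / A by positivity)
    apply this.congr
    intro N
    rw [mul_div_assoc]
  have hyT : Tendsto (fun N : ℕ => ((N:ℝ) - 1) - (N:ℝ) * l / A) atTop atTop := by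
    have h1 : Tendsto (fun N : ℕ => (N:ℝ) * (1 - l / A) - 1) atTop atTop := by
      apply tendsto_atTop_add_const_right
      exact (tendsto_natCast_atTop_atTop (R := ℝ)).atTop_mul_const
        (show (0:ℝ) < 1 - l / A by
          have : l / A < 1 := (div_lt_one ha).mpr hla
          linarith)
    apply h1.congr
    intro N
    field_simp
    ring
  have hif : ∀ᶠ N : ℕ in atTop, ¬(jf N = 0 ∨ jf N = N - 1) := by
    filter_upwards [eventually_ge_atTop 2, hxT.eventually_ge_atTop 1,
      hyT.eventually_ge_atTop 1] with N hN2 hx1 hy1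
    have hjge : 1 ≤ ⌊(N:ℝ) * l / A⌋ := Int.le_floor.mpr (by exact_mod_cast hx1)
    have hne0 : jf N ≠ 0 := by
      simp only [hjf]
      omega
    have hneN : jf N ≠ N - 1 := by
      have hc1 : ((jf N : ℕ):ℝ) ≤ (N:ℝ) * l / A := by rw [hjcast]; exact Int.floor_le _
      have hc2 : ((jf N : ℕ):ℝ) < ((N - 1 : ℕ):ℝ) := by
        rw [Nat.cast_sub (by omega : 1 ≤ N)]
        push_cast
        linarith
      have : jf N < N - 1 := by exact_mod_cast hc2
      omega
    tauto
  -- rational function limits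
  have hrat : Tendsto (fun N : ℕ => ((N:ℝ) - 1) / (N:ℝ)) atTop (nhds 1) := by
    have h1 : Tendsto (fun N : ℕ => 1 - 1 / (N:ℝ)) atTop (nhds 1) := by
      have := tendsto_one_div_atTop_nhds_zero_nat (𝕜 := ℝ)
      have h2 := tendsto_const_nhds (α := ℕ) (f := atTop) (x := (1:ℝ)) |>.sub this
      simpa using h2
    apply Tendsto.congr' ?_ h1
    filter_upwards [eventually_ge_atTop 1] with N hN1
    have hN0 : (N:ℝ) ≠ 0 := by
      have : (0:ℝ) < (N:ℝ) := by exact_mod_cast (by omega : 0 < N)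
      exact this.ne'
    field_simp
  have hrat' : Tendsto (fun N : ℕ => (N:ℝ) / ((N:ℝ) - 1)) atTop (nhds 1) := by
    have := hrat.inv₀ one_ne_zero
    simpa [inv_div] using this
  -- limit of the h-part
  have hXt : Tendsto (fun N : ℕ => 2 * ((2*(N-1):ℕ):ℝ) * W / ((N:ℝ)/(ρ*W))) atTop
      (nhds (4 * ρ * W^2)) := by
    have h1 : Tendsto (fun N : ℕ => (4 * ρ * W^2) * (((N:ℝ) - 1) / (N:ℝ))) atTop
        (nhds ((4 * ρ * W^2) * 1)) := hrat.const_mul _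
    rw [mul_one] at h1
    apply Tendsto.congr' ?_ h1
    filter_upwards [eventually_ge_atTop 1] with N hN1
    have hN0 : (0:ℝ) < (N:ℝ) := by exact_mod_cast (by omega : 0 < N)
    push_cast [Nat.cast_sub (by omega : 1 ≤ N)]
    field_simp
    ring
  have hsXt : Tendsto (fun N : ℕ =>
      Real.sqrt (2 * ((2*(N-1):ℕ):ℝ) * W / ((N:ℝ)/(ρ*W)))) atTop
      (nhds (2 * sq * W)) := by
    have := (Real.continuous_sqrt.tendsto _).comp hXt
    rw [Function.comp_def] at this
    rwa [sqrt_four_rho hρ hW] at this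
  have hYt : Tendsto (fun N : ℕ => Real.exp (2 * π * W * ((jf N : ℕ):ℝ)^2 /
      (((2*(N-1):ℕ):ℝ) * ((N:ℝ)/(ρ*W))))) atTop (nhds (Real.exp (π * l^2))) := by
    have h0 : Tendsto (fun N : ℕ => π * sf N * (sf N * ((N:ℝ)/((N:ℝ) - 1)))) atTop
        (nhds (π * l * (l * 1))) := (tendsto_const_nhds.mul hsf).mul (hsf.mul hrat')
    rw [show π * l * (l * 1) = π * l^2 by ring] at h0
    have h1 : Tendsto (fun N : ℕ => 2 * π * W * ((jf N : ℕ):ℝ)^2 /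
        (((2*(N-1):ℕ):ℝ) * ((N:ℝ)/(ρ*W)))) atTop (nhds (π * l^2)) := by
      apply Tendsto.congr' ?_ h0
      filter_upwards [eventually_ge_atTop 2] with N hN2
      have hN0 : (0:ℝ) < (N:ℝ) := by exact_mod_cast (by omega : 0 < N)
      have hN1 : (1:ℝ) < (N:ℝ) := by exact_mod_cast (by omega : 1 < N)
      have hNm1 : (N:ℝ) - 1 ≠ 0 := by linarith
      simp only [hsfd]
      rw [hAval]
      push_cast [Nat.cast_sub (by omega : 1 ≤ N)]
      rw [← hsqsq]
      field_simp
    exact (Real.continuous_exp.tendsto _).comp h1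
  have hpt : Tendsto (fun N : ℕ => 2 * A / ρ * Real.exp (2 * π * W * ((jf N : ℕ):ℝ)^2 /
      (((2*(N-1):ℕ):ℝ) * ((N:ℝ)/(ρ*W)))) /
      Real.sqrt (2 * ((2*(N-1):ℕ):ℝ) * W / ((N:ℝ)/(ρ*W)))) atTop
      (nhds (2 * A / ρ * Real.exp (π * l^2) / (2 * sq * W))) :=
    (tendsto_const_nhds.mul hYt).div hsXt (by positivity)
  have hinv : Tendsto (fun N : ℕ => A / (N:ℝ) * hval ρ W N (jf N)) atTop
      (nhds (Real.exp (π * l^2) / ρ)) := by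
    have heq2 : ∀ᶠ N : ℕ in atTop, 2 * A / ρ * Real.exp (2 * π * W * ((jf N : ℕ):ℝ)^2 /
        (((2*(N-1):ℕ):ℝ) * ((N:ℝ)/(ρ*W)))) /
        Real.sqrt (2 * ((2*(N-1):ℕ):ℝ) * W / ((N:ℝ)/(ρ*W)))
        = A / (N:ℝ) * hval ρ W N (jf N) := by
      filter_upwards [eventually_ge_atTop 2, hif] with N hN2 hifN
      have hN0 : (0:ℝ) < (N:ℝ) := by exact_mod_cast (by omega : 0 < N)
      have hnn := nn_cast_pos hN2
      have hLpos : (0:ℝ) < (N:ℝ)/(ρ*W) := by positivity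
      have hX : (0:ℝ) < 2 * ((2*(N-1):ℕ):ℝ) * W / ((N:ℝ)/(ρ*W)) := by positivity
      have hsX : 0 < Real.sqrt (2 * ((2*(N-1):ℕ):ℝ) * W / ((N:ℝ)/(ρ*W))) :=
        Real.sqrt_pos.mpr hX
      rw [hval, if_neg hifN]
      set s := Real.sqrt (2 * ((2*(N-1):ℕ):ℝ) * W / ((N:ℝ)/(ρ*W))) with hsdef
      set e := Real.exp (2 * π * W * ((jf N : ℕ):ℝ)^2 /
        (((2*(N-1):ℕ):ℝ) * ((N:ℝ)/(ρ*W)))) with hedef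
      have hse : s ≠ 0 := hsX.ne'
      field_simp
    have h3 := hpt.congr' heq2
    rwa [show 2 * A / ρ * Real.exp (π * l^2) / (2 * sq * W) = Real.exp (π * l^2) / ρ by
      rw [hAval]; field_simp] at h3
  have hq : Tendsto (fun N : ℕ => ((N:ℝ) / A) / hval ρ W N (jf N)) atTop
      (nhds (ρ * Real.exp (-(π * l^2)))) := by
    have h1 := hinv.inv₀ (by positivity)
    rw [show (Real.exp (π * l^2) / ρ)⁻¹ = ρ * Real.exp (-(π * l^2)) by
      rw [Real.exp_neg]; field_simp] at h1
    apply Tendsto.congr ?_ h1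
    intro N
    rw [mul_inv, inv_div, ← div_eq_mul_inv]
  -- limits of the factors of MD
  have hu : Tendsto (fun N : ℕ => ((2*(N-1):ℕ):ℝ) / ((N:ℝ)/(ρ*W))) atTop
      (nhds (2 * ρ * W)) := by
    have h1 : Tendsto (fun N : ℕ => (2 * ρ * W) * (((N:ℝ) - 1) / (N:ℝ))) atTop
        (nhds ((2 * ρ * W) * 1)) := hrat.const_mul _
    rw [mul_one] at h1
    apply Tendsto.congr' ?_ h1
    filter_upwards [eventually_ge_atTop 1] with N hN1
    have hN0 : (0:ℝ) < (N:ℝ) := by exact_mod_cast (by omega : 0 < N)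
    push_cast [Nat.cast_sub (by omega : 1 ≤ N)]
    field_simp
  have hw : Tendsto (fun N : ℕ => ((2*(N-1):ℕ):ℝ) * W / ((N:ℝ)/(ρ*W))) atTop
      (nhds (2 * ρ * W^2)) := by
    have h1 : Tendsto (fun N : ℕ => (2 * ρ * W^2) * (((N:ℝ) - 1) / (N:ℝ))) atTop
        (nhds ((2 * ρ * W^2) * 1)) := hrat.const_mul _
    rw [mul_one] at h1
    apply Tendsto.congr' ?_ h1
    filter_upwards [eventually_ge_atTop 1] with N hN1
    have hN0 : (0:ℝ) < (N:ℝ) := by exact_mod_cast (by omega : 0 < N)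
    push_cast [Nat.cast_sub (by omega : 1 ≤ N)]
    field_simp
  have hgs : Tendsto (fun N : ℕ => sq * sf N) atTop (nhds (sq * l)) := hsf.const_mul _
  have hss : Tendsto (fun N : ℕ => sq * W * sf N) atTop (nhds (sq * W * l)) :=
    hsf.const_mul _
  have hτpos : (0:ℝ) < ((((2 * ρ * W^2 : ℝ)):ℂ) * I).im := by
    simp only [Complex.mul_im, Complex.ofReal_re, Complex.I_im, Complex.ofReal_im,
      Complex.I_re, mul_one, mul_zero, add_zero]
    positivity
  have hMDw : ∀ w : ℂ, Tendsto
      (fun N : ℕ => MD (2*(N-1)) ((N:ℝ)/(ρ*W)) W ((jf N : ℕ):ℝ) w) atTop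
      (nhds (Mlim ρ W w l)) := by
    intro w
    have hvlim : Tendsto (fun N : ℕ => (((sq * W * sf N : ℝ)):ℂ) * I +
        ((((2*(N-1):ℕ):ℝ) / ((N:ℝ)/(ρ*W)) : ℝ):ℂ) * w) atTop
        (nhds ((((sq * W * l : ℝ)):ℂ) * I + (((2 * ρ * W : ℝ)):ℂ) * w)) := by
      apply Tendsto.add
      · exact (((Complex.continuous_ofReal.tendsto _).comp hss).mul_const I)
      · exact (((Complex.continuous_ofReal.tendsto _).comp hu).mul_const w)
    have hvlim' : Tendsto (fun N : ℕ => (((sq * W * sf N : ℝ)):ℂ) * I -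
        ((((2*(N-1):ℕ):ℝ) / ((N:ℝ)/(ρ*W)) : ℝ):ℂ) * w) atTop
        (nhds ((((sq * W * l : ℝ)):ℂ) * I - (((2 * ρ * W : ℝ)):ℂ) * w)) := by
      apply Tendsto.sub
      · exact (((Complex.continuous_ofReal.tendsto _).comp hss).mul_const I)
      · exact (((Complex.continuous_ofReal.tendsto _).comp hu).mul_const w)
    have hτlim : Tendsto (fun N : ℕ =>
        ((((2*(N-1):ℕ):ℝ) * W / ((N:ℝ)/(ρ*W)) : ℝ):ℂ) * I) atTop
        (nhds ((((2 * ρ * W^2 : ℝ)):ℂ) * I)) :=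
      ((Complex.continuous_ofReal.tendsto _).comp hw).mul_const I
    have hexplim : Tendsto (fun N : ℕ =>
        Complex.exp (2 * (π:ℂ) * I * w * (((sq * sf N : ℝ)):ℂ))) atTop
        (nhds (Complex.exp (2 * (π:ℂ) * I * w * (((sq * l : ℝ)):ℂ)))) :=
      (Complex.continuous_exp.tendsto _).comp
        (tendsto_const_nhds.mul ((Complex.continuous_ofReal.tendsto _).comp hgs))
    have hexplim' : Tendsto (fun N : ℕ =>
        Complex.exp (-(2 * (π:ℂ) * I * w * (((sq * sf N : ℝ)):ℂ)))) atTop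
        (nhds (Complex.exp (-(2 * (π:ℂ) * I * w * (((sq * l : ℝ)):ℂ))))) :=
      (Complex.continuous_exp.tendsto _).comp
        (tendsto_const_nhds.mul ((Complex.continuous_ofReal.tendsto _).comp hgs)).neg
    have hgood : Tendsto (fun N : ℕ =>
        Complex.exp (2 * (π:ℂ) * I * w * (((sq * sf N : ℝ)):ℂ)) *
          jtheta2 ((((sq * W * sf N : ℝ)):ℂ) * I +
            ((((2*(N-1):ℕ):ℝ) / ((N:ℝ)/(ρ*W)) : ℝ):ℂ) * w)
            (((((2*(N-1):ℕ):ℝ) * W / ((N:ℝ)/(ρ*W)) : ℝ):ℂ) * I) +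
        Complex.exp (-(2 * (π:ℂ) * I * w * (((sq * sf N : ℝ)):ℂ))) *
          jtheta2 ((((sq * W * sf N : ℝ)):ℂ) * I -
            ((((2*(N-1):ℕ):ℝ) / ((N:ℝ)/(ρ*W)) : ℝ):ℂ) * w)
            (((((2*(N-1):ℕ):ℝ) * W / ((N:ℝ)/(ρ*W)) : ℝ):ℂ) * I)) atTop
        (nhds (Mlim ρ W w l)) := by
      rw [Mlim]
      exact (hexplim.mul (jtheta2_tendsto hτpos hvlim hτlim)).add
        (hexplim'.mul (jtheta2_tendsto hτpos hvlim' hτlim))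
    apply Tendsto.congr' ?_ hgood
    filter_upwards [eventually_ge_atTop 1] with N hN1
    have hN0 : (0:ℝ) < (N:ℝ) := by exact_mod_cast (by omega : 0 < N)
    have hLpos : (0:ℝ) < (N:ℝ)/(ρ*W) := by positivity
    have r1 : sq * sf N = ((jf N : ℕ):ℝ) / ((N:ℝ)/(ρ*W)) := by
      simp only [hsfd]
      rw [hAval, ← hsqsq]
      field_simp
    have r2 : sq * W * sf N = ((jf N : ℕ):ℝ) * W / ((N:ℝ)/(ρ*W)) := by
      simp only [hsfd]
      rw [hAval, ← hsqsq]
      field_simp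
    have eArg : 2*(Real.pi:ℂ)*I*((((jf N : ℕ):ℝ)):ℂ)*w/((((N:ℝ)/(ρ*W) : ℝ)):ℂ) =
        2*(Real.pi:ℂ)*I*w*(((sq * sf N : ℝ)):ℂ) := by
      rw [r1]; push_cast; ring
    have eV1 : ((((jf N : ℕ):ℝ)):ℂ)*(I*((W:ℝ):ℂ)/((((N:ℝ)/(ρ*W) : ℝ)):ℂ)) +
        ((2*(N-1):ℕ):ℂ)*w/((((N:ℝ)/(ρ*W) : ℝ)):ℂ) =
        (((sq * W * sf N : ℝ)):ℂ)*I +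
          (((((2*(N-1):ℕ):ℝ) / ((N:ℝ)/(ρ*W)) : ℝ)):ℂ)*w := by
      rw [r2]; push_cast; ring
    have eV2 : ((((jf N : ℕ):ℝ)):ℂ)*(I*((W:ℝ):ℂ)/((((N:ℝ)/(ρ*W) : ℝ)):ℂ)) -
        ((2*(N-1):ℕ):ℂ)*w/((((N:ℝ)/(ρ*W) : ℝ)):ℂ) =
        (((sq * W * sf N : ℝ)):ℂ)*I -
          (((((2*(N-1):ℕ):ℝ) / ((N:ℝ)/(ρ*W)) : ℝ)):ℂ)*w := by
      rw [r2]; push_cast; ring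
    have eT : ((2*(N-1):ℕ):ℂ)*(I*((W:ℝ):ℂ)/((((N:ℝ)/(ρ*W) : ℝ)):ℂ)) =
        (((((2*(N-1):ℕ):ℝ) * W / ((N:ℝ)/(ρ*W)) : ℝ)):ℂ)*I := by
      push_cast; ring
    rw [MD, eArg, eV1, eV2, eT]
  -- assemble
  have heqphi : ∀ N : ℕ, phiN ρ W z z' N l =
      ((((N:ℝ) / A) / hval ρ W N (jf N) : ℝ):ℂ) *
        (MD (2*(N-1)) ((N:ℝ)/(ρ*W)) W ((jf N : ℕ):ℝ) z *
          conj (MD (2*(N-1)) ((N:ℝ)/(ρ*W)) W ((jf N : ℕ):ℝ) z')) := by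
    intro N
    rw [phiN, termD]
    push_cast
    ring
  have hfinal : Tendsto (fun N : ℕ =>
      ((((N:ℝ) / A) / hval ρ W N (jf N) : ℝ):ℂ) *
        (MD (2*(N-1)) ((N:ℝ)/(ρ*W)) W ((jf N : ℕ):ℝ) z *
          conj (MD (2*(N-1)) ((N:ℝ)/(ρ*W)) W ((jf N : ℕ):ℝ) z'))) atTop
      (nhds (philim ρ W z z' l)) := by
    rw [philim]
    have hrexp : ρ * Real.exp (-(π * l^2)) = ρ * Real.exp (-(π * l^2)) := rfl
    apply Tendsto.mul
    · exact (Complex.continuous_ofReal.tendsto _).comp hq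
    · apply Tendsto.mul (hMDw z)
      have hconj := (Complex.continuous_conj.tendsto _).comp (hMDw z')
      exact hconj
  exact (hfinal.congr' (Filter.Eventually.of_forall fun N => (heqphi N).symm)).congr
    fun N => rfl

set_option maxHeartbeats 2000000 in
lemma philim_integral (hρ : 0 < ρ) (hW : 0 < W) :
    (∫ l in (0 : ℝ)..(aa ρ W), philim ρ W z z' l) =
      (ρ : ℂ) *
        ((∫ l in (-(Real.sqrt ρ * W))..(Real.sqrt ρ * W),
            Complex.exp (-(π * l ^ 2) + 2 * π * I * Real.sqrt ρ * (z - conj z') * l) *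
              jtheta2 (Real.sqrt ρ * W * (I * l + 2 * Real.sqrt ρ * z)) (2 * I * ρ * W ^ 2) *
              jtheta2 (Real.sqrt ρ * W * (I * l - 2 * Real.sqrt ρ * conj z'))
                (2 * I * ρ * W ^ 2)) +
          ∫ l in (-(Real.sqrt ρ * W))..(Real.sqrt ρ * W),
            Complex.exp (-(π * l ^ 2) + 2 * π * I * Real.sqrt ρ * (z + conj z') * l) *
              jtheta2 (Real.sqrt ρ * W * (I * l + 2 * Real.sqrt ρ * z)) (2 * I * ρ * W ^ 2) *
              jtheta2 (Real.sqrt ρ * W * (I * l + 2 * Real.sqrt ρ * conj z'))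
                (2 * I * ρ * W ^ 2)) := by
  have ha : 0 < aa ρ W := aa_pos hρ hW
  set sq := Real.sqrt ρ with hsq
  have hsq0 : 0 < sq := Real.sqrt_pos.mpr hρ
  have hsqsq : sq * sq = ρ := Real.mul_self_sqrt hρ.le
  have hsqsqC : ((sq:ℝ):ℂ) * ((sq:ℝ):ℂ) = ((ρ:ℝ):ℂ) := by
    rw [← Complex.ofReal_mul, hsqsq]
  set g1 : ℝ → ℂ := fun l =>
    Complex.exp (-(π * l ^ 2) + 2 * π * I * sq * (z - conj z') * l) *
      jtheta2 (sq * W * (I * l + 2 * sq * z)) (2 * I * ρ * W ^ 2) *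
      jtheta2 (sq * W * (I * l - 2 * sq * conj z')) (2 * I * ρ * W ^ 2) with hg1
  set g2 : ℝ → ℂ := fun l =>
    Complex.exp (-(π * l ^ 2) + 2 * π * I * sq * (z + conj z') * l) *
      jtheta2 (sq * W * (I * l + 2 * sq * z)) (2 * I * ρ * W ^ 2) *
      jtheta2 (sq * W * (I * l + 2 * sq * conj z')) (2 * I * ρ * W ^ 2) with hg2
  have hτpos : (0:ℝ) < ((2:ℂ) * I * (ρ:ℂ) * (W:ℂ)^2).im := by
    have h1 : (2:ℂ) * I * (ρ:ℂ) * (W:ℂ)^2 = ((2*ρ*W^2 : ℝ):ℂ) * I := by push_cast; ring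
    rw [h1]
    simp only [Complex.mul_im, Complex.ofReal_re, Complex.I_im, Complex.ofReal_im,
      Complex.I_re, mul_one, mul_zero, add_zero]
    positivity
  -- pointwise identity
  have hpoint : ∀ l : ℝ, philim ρ W z z' l = (ρ:ℂ) * (g1 l + g1 (-l) + g2 l + g2 (-l)) := by
    intro l
    set T : ℂ := ((2 * ρ * W^2 : ℝ):ℂ) * I with hT
    set Θa := jtheta2 (((sq * W * l : ℝ):ℂ) * I + ((2 * ρ * W : ℝ):ℂ) * z) T with hΘa
    set Θb := jtheta2 (((sq * W * l : ℝ):ℂ) * I - ((2 * ρ * W : ℝ):ℂ) * z) T with hΘb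
    set Θc := jtheta2 (((sq * W * l : ℝ):ℂ) * I + ((2 * ρ * W : ℝ):ℂ) * conj z') T with hΘc
    set Θd := jtheta2 (((sq * W * l : ℝ):ℂ) * I - ((2 * ρ * W : ℝ):ℂ) * conj z') T with hΘd
    have eT : (2:ℂ) * I * (ρ:ℂ) * (W:ℂ)^2 = T := by rw [hT]; push_cast; ring
    have ea1 : ((sq:ℝ):ℂ) * ((W:ℝ):ℂ) * (I * ((l:ℝ):ℂ) + 2 * ((sq:ℝ):ℂ) * z) =
        ((sq * W * l : ℝ):ℂ) * I + ((2 * ρ * W : ℝ):ℂ) * z := by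
      push_cast
      linear_combination (2 * (W:ℂ) * z) * hsqsqC
    have ea2 : ((sq:ℝ):ℂ) * ((W:ℝ):ℂ) * (I * ((l:ℝ):ℂ) - 2 * ((sq:ℝ):ℂ) * conj z') =
        ((sq * W * l : ℝ):ℂ) * I - ((2 * ρ * W : ℝ):ℂ) * conj z' := by
      push_cast
      linear_combination (-(2 * (W:ℂ) * conj z')) * hsqsqC
    have ea3 : ((sq:ℝ):ℂ) * ((W:ℝ):ℂ) * (I * ((-l:ℝ):ℂ) + 2 * ((sq:ℝ):ℂ) * z) =
        -(((sq * W * l : ℝ):ℂ) * I - ((2 * ρ * W : ℝ):ℂ) * z) := by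
      push_cast
      linear_combination (2 * (W:ℂ) * z) * hsqsqC
    have ea4 : ((sq:ℝ):ℂ) * ((W:ℝ):ℂ) * (I * ((-l:ℝ):ℂ) - 2 * ((sq:ℝ):ℂ) * conj z') =
        -(((sq * W * l : ℝ):ℂ) * I + ((2 * ρ * W : ℝ):ℂ) * conj z') := by
      push_cast
      linear_combination (-(2 * (W:ℂ) * conj z')) * hsqsqC
    have ea5 : ((sq:ℝ):ℂ) * ((W:ℝ):ℂ) * (I * ((l:ℝ):ℂ) + 2 * ((sq:ℝ):ℂ) * conj z') =
        ((sq * W * l : ℝ):ℂ) * I + ((2 * ρ * W : ℝ):ℂ) * conj z' := by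
      push_cast
      linear_combination (2 * (W:ℂ) * conj z') * hsqsqC
    have ea6 : ((sq:ℝ):ℂ) * ((W:ℝ):ℂ) * (I * ((-l:ℝ):ℂ) + 2 * ((sq:ℝ):ℂ) * conj z') =
        -(((sq * W * l : ℝ):ℂ) * I - ((2 * ρ * W : ℝ):ℂ) * conj z') := by
      push_cast
      linear_combination (2 * (W:ℂ) * conj z') * hsqsqC
    -- conj of Mlim
    have hCM : conj (Mlim ρ W z' l) =
        Complex.exp (-(2 * (π:ℂ) * I * (conj z') * ((sq * l : ℝ):ℂ))) * Θd +
        Complex.exp (2 * (π:ℂ) * I * (conj z') * ((sq * l : ℝ):ℂ)) * Θc := by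
      rw [Mlim, map_add, map_mul, map_mul, jtheta2_conj, jtheta2_conj,
        ← Complex.exp_conj, ← Complex.exp_conj]
      have c1 : conj (2 * (π:ℂ) * I * z' * ((sq * l : ℝ):ℂ)) =
          -(2 * (π:ℂ) * I * (conj z') * ((sq * l : ℝ):ℂ)) := by
        simp only [map_mul, map_ofNat, Complex.conj_I, Complex.conj_ofReal]
        ring
      have c2 : conj (-(2 * (π:ℂ) * I * z' * ((sq * l : ℝ):ℂ))) =
          2 * (π:ℂ) * I * (conj z') * ((sq * l : ℝ):ℂ) := by
        rw [map_neg, c1, neg_neg]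
      have c3 : -(conj (((sq * W * l : ℝ):ℂ) * I + ((2 * ρ * W : ℝ):ℂ) * z')) =
          ((sq * W * l : ℝ):ℂ) * I - ((2 * ρ * W : ℝ):ℂ) * conj z' := by
        simp only [map_add, map_mul, Complex.conj_I, Complex.conj_ofReal]
        ring
      have c4 : -(conj (((sq * W * l : ℝ):ℂ) * I - ((2 * ρ * W : ℝ):ℂ) * z')) =
          ((sq * W * l : ℝ):ℂ) * I + ((2 * ρ * W : ℝ):ℂ) * conj z' := by
        simp only [map_sub, map_mul, Complex.conj_I, Complex.conj_ofReal]
        ring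
      have c5 : -(conj T) = T := by
        rw [hT]
        simp only [map_mul, Complex.conj_I, Complex.conj_ofReal]
        ring
      rw [c1, c2, c3, c4, c5, hΘd, hΘc]
    rw [philim, Mlim, hCM]
    simp only [hg1, hg2]
    rw [ea1, ea2, ea3, ea4, ea5, ea6, eT]
    rw [jtheta2_neg, jtheta2_neg, jtheta2_neg]
    rw [← hΘa, ← hΘb, ← hΘc, ← hΘd]
    -- now pure exponential algebra
    have x1 : ((ρ * Real.exp (-(π * l^2)) : ℝ):ℂ) *
        (Complex.exp (2 * (π:ℂ) * I * z * ((sq * l : ℝ):ℂ)) *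
          Complex.exp (-(2 * (π:ℂ) * I * (conj z') * ((sq * l : ℝ):ℂ)))) =
        (ρ:ℂ) * Complex.exp (-((π:ℂ) * ((l:ℝ):ℂ) ^ 2) +
          2 * (π:ℂ) * I * ((sq:ℝ):ℂ) * (z - conj z') * ((l:ℝ):ℂ)) := by
      rw [Complex.ofReal_mul, Complex.ofReal_exp, mul_assoc, ← Complex.exp_add,
        ← Complex.exp_add]
      congr 1
      push_cast
      ring
    have x2 : ((ρ * Real.exp (-(π * l^2)) : ℝ):ℂ) *
        (Complex.exp (2 * (π:ℂ) * I * z * ((sq * l : ℝ):ℂ)) *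
          Complex.exp (2 * (π:ℂ) * I * (conj z') * ((sq * l : ℝ):ℂ))) =
        (ρ:ℂ) * Complex.exp (-((π:ℂ) * ((l:ℝ):ℂ) ^ 2) +
          2 * (π:ℂ) * I * ((sq:ℝ):ℂ) * (z + conj z') * ((l:ℝ):ℂ)) := by
      rw [Complex.ofReal_mul, Complex.ofReal_exp, mul_assoc, ← Complex.exp_add,
        ← Complex.exp_add]
      congr 1
      push_cast
      ring
    have y1 : ((ρ * Real.exp (-(π * l^2)) : ℝ):ℂ) *
        (Complex.exp (-(2 * (π:ℂ) * I * z * ((sq * l : ℝ):ℂ))) *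
          Complex.exp (2 * (π:ℂ) * I * (conj z') * ((sq * l : ℝ):ℂ))) =
        (ρ:ℂ) * Complex.exp (-((π:ℂ) * ((-l:ℝ):ℂ) ^ 2) +
          2 * (π:ℂ) * I * ((sq:ℝ):ℂ) * (z - conj z') * ((-l:ℝ):ℂ)) := by
      rw [Complex.ofReal_mul, Complex.ofReal_exp, mul_assoc, ← Complex.exp_add,
        ← Complex.exp_add]
      congr 1
      push_cast
      ring
    have y2 : ((ρ * Real.exp (-(π * l^2)) : ℝ):ℂ) *
        (Complex.exp (-(2 * (π:ℂ) * I * z * ((sq * l : ℝ):ℂ))) *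
          Complex.exp (-(2 * (π:ℂ) * I * (conj z') * ((sq * l : ℝ):ℂ)))) =
        (ρ:ℂ) * Complex.exp (-((π:ℂ) * ((-l:ℝ):ℂ) ^ 2) +
          2 * (π:ℂ) * I * ((sq:ℝ):ℂ) * (z + conj z') * ((-l:ℝ):ℂ)) := by
      rw [Complex.ofReal_mul, Complex.ofReal_exp, mul_assoc, ← Complex.exp_add,
        ← Complex.exp_add]
      congr 1
      push_cast
      ring
    linear_combination (Θa * Θd) * x1 + (Θb * Θc) * y1 + (Θa * Θc) * x2 + (Θb * Θd) * y2
  -- continuity and integrability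
  have hg1c : Continuous g1 := by
    rw [hg1]
    apply Continuous.mul
    apply Continuous.mul
    · apply Complex.continuous_exp.comp
      fun_prop
    · apply continuous_jtheta2_comp hτpos
      fun_prop
    · apply continuous_jtheta2_comp hτpos
      fun_prop
  have hg2c : Continuous g2 := by
    rw [hg2]
    apply Continuous.mul
    apply Continuous.mul
    · apply Complex.continuous_exp.comp
      fun_prop
    · apply continuous_jtheta2_comp hτpos
      fun_prop
    · apply continuous_jtheta2_comp hτpos
      fun_prop
  have hint1 : ∀ u v : ℝ, IntervalIntegrable g1 MeasureTheory.volume u v :=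
    fun u v => hg1c.intervalIntegrable u v
  have hint2 : ∀ u v : ℝ, IntervalIntegrable g2 MeasureTheory.volume u v :=
    fun u v => hg2c.intervalIntegrable u v
  have hint1n : ∀ u v : ℝ, IntervalIntegrable (fun l => g1 (-l)) MeasureTheory.volume u v :=
    fun u v => (hg1c.comp continuous_neg).intervalIntegrable u v
  have hint2n : ∀ u v : ℝ, IntervalIntegrable (fun l => g2 (-l)) MeasureTheory.volume u v :=
    fun u v => (hg2c.comp continuous_neg).intervalIntegrable u v
  have hbnd : sq * W = aa ρ W := rfl
  rw [hbnd]
  calc (∫ l in (0:ℝ)..(aa ρ W), philim ρ W z z' l)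
      = ∫ l in (0:ℝ)..(aa ρ W), (ρ:ℂ) * (g1 l + g1 (-l) + g2 l + g2 (-l)) :=
        intervalIntegral.integral_congr (fun l _ => hpoint l)
    _ = (ρ:ℂ) * ∫ l in (0:ℝ)..(aa ρ W), (g1 l + g1 (-l) + g2 l + g2 (-l)) :=
        intervalIntegral.integral_const_mul _ _
    _ = (ρ:ℂ) * ((∫ l in (0:ℝ)..(aa ρ W), g1 l) + (∫ l in (0:ℝ)..(aa ρ W), g1 (-l)) +
          (∫ l in (0:ℝ)..(aa ρ W), g2 l) + (∫ l in (0:ℝ)..(aa ρ W), g2 (-l))) := by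
        rw [intervalIntegral.integral_add (((hint1 _ _).add (hint1n _ _)).add (hint2 _ _))
          (hint2n _ _),
          intervalIntegral.integral_add ((hint1 _ _).add (hint1n _ _)) (hint2 _ _),
          intervalIntegral.integral_add (hint1 _ _) (hint1n _ _)]
    _ = (ρ:ℂ) * ((∫ l in (-(aa ρ W))..(aa ρ W), g1 l) +
          (∫ l in (-(aa ρ W))..(aa ρ W), g2 l)) := by
        rw [intervalIntegral.integral_comp_neg (a := (0:ℝ)) (b := aa ρ W) g1,
          intervalIntegral.integral_comp_neg (a := (0:ℝ)) (b := aa ρ W) g2, neg_zero,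
          ← intervalIntegral.integral_add_adjacent_intervals (hint1 (-(aa ρ W)) 0)
            (hint1 0 (aa ρ W)),
          ← intervalIntegral.integral_add_adjacent_intervals (hint2 (-(aa ρ W)) 0)
            (hint2 0 (aa ρ W))]
        ring


end Main

end St14


theorem statement14 (ρ W : ℝ) (hρ : 0 < ρ) (hW : 0 < W) (z z' : ℂ) :
    Filter.Tendsto (fun N : ℕ => KD N ρ W z z') Filter.atTop
      (nhds (ρ * Complex.exp (-(2 * π * ρ * (z.im ^ 2 + z'.im ^ 2))) *
        ((∫ l in (-(Real.sqrt ρ * W))..(Real.sqrt ρ * W),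
            Complex.exp (-(π * l ^ 2) + 2 * π * I * Real.sqrt ρ * (z - conj z') * l) *
              jtheta2 (Real.sqrt ρ * W * (I * l + 2 * Real.sqrt ρ * z)) (2 * I * ρ * W ^ 2) *
              jtheta2 (Real.sqrt ρ * W * (I * l - 2 * Real.sqrt ρ * conj z'))
                (2 * I * ρ * W ^ 2)) +
          ∫ l in (-(Real.sqrt ρ * W))..(Real.sqrt ρ * W),
            Complex.exp (-(π * l ^ 2) + 2 * π * I * Real.sqrt ρ * (z + conj z') * l) *
              jtheta2 (Real.sqrt ρ * W * (I * l + 2 * Real.sqrt ρ * z)) (2 * I * ρ * W ^ 2) *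
              jtheta2 (Real.sqrt ρ * W * (I * l + 2 * Real.sqrt ρ * conj z'))
                (2 * I * ρ * W ^ 2)))) := by
  open St14 Filter in
  have ha : 0 < aa ρ W := aa_pos hρ hW
  -- limit of the exponential prefactor
  have hrat : Tendsto (fun N : ℕ => ((N:ℝ) - 1) / (N:ℝ)) atTop (nhds 1) := by
    have h1 : Tendsto (fun N : ℕ => 1 - 1 / (N:ℝ)) atTop (nhds 1) := by
      have := tendsto_one_div_atTop_nhds_zero_nat (𝕜 := ℝ)
      have h2 := tendsto_const_nhds (α := ℕ) (f := atTop) (x := (1:ℝ)) |>.sub this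
      simpa using h2
    apply Tendsto.congr' ?_ h1
    filter_upwards [eventually_ge_atTop 1] with N hN1
    have hN0 : (N:ℝ) ≠ 0 := by
      have : (0:ℝ) < (N:ℝ) := by exact_mod_cast (by omega : 0 < N)
      exact this.ne'
    field_simp
  have hE : Tendsto (fun N : ℕ => Complex.exp (-(π * (2 * ((N : ℂ) - 1)) *
      ((z.im : ℂ) ^ 2 + (z'.im : ℂ) ^ 2) / (((N : ℝ) / (ρ * W) : ℝ) * (W : ℂ)))))
      atTop (nhds (Complex.exp (-(2 * (π:ℂ) * (ρ:ℂ) * ((z.im : ℂ) ^ 2 + (z'.im : ℂ) ^ 2))))) := by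
    apply (Complex.continuous_exp.tendsto _).comp
    have harg : Tendsto (fun N : ℕ => -((π:ℂ) * ((z.im : ℂ) ^ 2 + (z'.im : ℂ) ^ 2) *
        ((2 * ρ * (((N:ℝ) - 1) / (N:ℝ)) : ℝ):ℂ))) atTop
        (nhds (-((π:ℂ) * ((z.im : ℂ) ^ 2 + (z'.im : ℂ) ^ 2) * ((2 * ρ * 1 : ℝ):ℂ)))) := by
      apply Tendsto.neg
      apply Tendsto.mul tendsto_const_nhds
      exact (Complex.continuous_ofReal.tendsto _).comp (hrat.const_mul _)
    rw [show -((π:ℂ) * ((z.im : ℂ) ^ 2 + (z'.im : ℂ) ^ 2) * ((2 * ρ * 1 : ℝ):ℂ)) =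
      -(2 * (π:ℂ) * (ρ:ℂ) * ((z.im : ℂ) ^ 2 + (z'.im : ℂ) ^ 2)) by push_cast; ring] at harg
    apply Tendsto.congr' ?_ harg
    filter_upwards [eventually_ge_atTop 1] with N hN1
    have hN0 : (0:ℝ) < (N:ℝ) := by exact_mod_cast (by omega : 0 < N)
    have hNC : ((N:ℝ):ℂ) ≠ 0 := by exact_mod_cast hN0.ne'
    have hρC : ((ρ:ℝ):ℂ) ≠ 0 := by exact_mod_cast hρ.ne'
    have hWC : ((W:ℝ):ℂ) ≠ 0 := by exact_mod_cast hW.ne'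
    have e1 : (((N:ℝ)/(ρ*W) : ℝ):ℂ) * (W:ℂ) = ((N:ℝ):ℂ)/((ρ:ℝ):ℂ) := by
      push_cast
      field_simp
    rw [e1]
    push_cast
    field_simp
  -- limit of the integral
  obtain ⟨D, hD⟩ := phiN_bound z z' hρ hW
  have hI : Tendsto (fun N : ℕ => ∫ l in (0:ℝ)..(aa ρ W), phiN ρ W z z' N l) atTop
      (nhds (∫ l in (0:ℝ)..(aa ρ W), philim ρ W z z' l)) := by
    apply intervalIntegral.tendsto_integral_filter_of_dominated_convergence
      (bound := fun _ => D)
    · exact Filter.Eventually.of_forall fun N =>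
        (phiN_meas z z' N).aestronglyMeasurable.restrict
    · filter_upwards [eventually_ge_atTop 2] with N hN2
      apply MeasureTheory.ae_of_all
      intro l hl
      rw [Set.uIoc_of_le ha.le] at hl
      exact hD N hN2 l hl
    · exact intervalIntegrable_const
    · have h0 : ∀ᵐ l : ℝ, l ≠ aa ρ W :=
        MeasureTheory.compl_mem_ae_iff.mpr (MeasureTheory.measure_singleton _)
      filter_upwards [h0] with l hlne hl
      rw [Set.uIoc_of_le ha.le] at hl
      exact phiN_tendsto z z' hρ hW ⟨hl.1, lt_of_le_of_ne hl.2 hlne⟩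
  have hmul := hE.mul hI
  have hKDeq : ∀ᶠ N : ℕ in atTop, (fun N : ℕ => Complex.exp (-(π * (2 * ((N : ℂ) - 1)) *
      ((z.im : ℂ) ^ 2 + (z'.im : ℂ) ^ 2) / (((N : ℝ) / (ρ * W) : ℝ) * (W : ℂ)))) *
      ∫ l in (0:ℝ)..(aa ρ W), phiN ρ W z z' N l) N = KD N ρ W z z' := by
    filter_upwards [eventually_ge_atTop 2] with N hN2
    exact (KD_eq z z' hρ hW hN2).symm
  have hfin := hmul.congr' hKDeq
  have hvalue : Complex.exp (-(2 * (π:ℂ) * (ρ:ℂ) * ((z.im : ℂ) ^ 2 + (z'.im : ℂ) ^ 2))) *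
      (∫ l in (0:ℝ)..(aa ρ W), philim ρ W z z' l) =
      (ρ:ℂ) * Complex.exp (-(2 * (π:ℂ) * (ρ:ℂ) * ((z.im : ℂ) ^ 2 + (z'.im : ℂ) ^ 2))) *
        ((∫ l in (-(Real.sqrt ρ * W))..(Real.sqrt ρ * W),
            Complex.exp (-(π * l ^ 2) + 2 * π * I * Real.sqrt ρ * (z - conj z') * l) *
              jtheta2 (Real.sqrt ρ * W * (I * l + 2 * Real.sqrt ρ * z)) (2 * I * ρ * W ^ 2) *
              jtheta2 (Real.sqrt ρ * W * (I * l - 2 * Real.sqrt ρ * conj z'))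
                (2 * I * ρ * W ^ 2)) +
          ∫ l in (-(Real.sqrt ρ * W))..(Real.sqrt ρ * W),
            Complex.exp (-(π * l ^ 2) + 2 * π * I * Real.sqrt ρ * (z + conj z') * l) *
              jtheta2 (Real.sqrt ρ * W * (I * l + 2 * Real.sqrt ρ * z)) (2 * I * ρ * W ^ 2) *
              jtheta2 (Real.sqrt ρ * W * (I * l + 2 * Real.sqrt ρ * conj z'))
                (2 * I * ρ * W ^ 2)) := by
    rw [philim_integral z z' hρ hW]
    ring
  rw [hvalue] at hfin
  exact hfin
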